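/- Let Λ₁ and Λ₂ be integral lattices. Any isomorphism of ρ-invariants φ : (C(Λ₁), ρ₁) → (C(Λ₂), ρ₂) induces an isomorphism of discriminant forms: the group isomorphism φ : Λ̄₁ → Λ̄₂ underlying the torsor isomorphism satisfies b₂(φ(x̄), φ(ȳ)) = b₁(x̄, ȳ) for all x̄, ȳ ∈ Λ̄₁. -/

import Mathlib

set_option linter.unusedSectionVars false

open Matrix BigOperators

namespace Greene

/-- A rational number is an integer. -/
def isInt (q : ℚ) : Prop := ∃ m : ℤ, q = (m : ℚ)

section LatticeDefs

variable {ι : Type} [Fintype ι] [DecidableEq ι]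
variable {ι' : Type} [Fintype ι'] [DecidableEq ι']

/-- The bilinear form on `ι → ℚ` with (integral) Gram matrix `B`. -/
def qform (B : Matrix ι ι ℤ) (x y : ι → ℚ) : ℚ :=
  x ⬝ᵥ ((B.map (Int.cast : ℤ → ℚ)) *ᵥ y)

/-- The set of integer vectors: the standard lattice inside `ι → ℚ`. -/
def intVecs (ι : Type) [Fintype ι] [DecidableEq ι] : Set (ι → ℚ) :=
  {x | ∀ i, isInt (x i)}

lemma qform_zero_left (B : Matrix ι ι ℤ) (y : ι → ℚ) : qform B 0 y = 0 :=
  zero_dotProduct _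

lemma qform_add_left (B : Matrix ι ι ℤ) (x x' y : ι → ℚ) :
    qform B (x + x') y = qform B x y + qform B x' y := add_dotProduct _ _ _

lemma qform_neg_left (B : Matrix ι ι ℤ) (x y : ι → ℚ) :
    qform B (-x) y = -qform B x y := neg_dotProduct _ _

/-- The dual lattice `S* = {x ∈ span_ℚ S | ⟨x,y⟩ ∈ ℤ for all y ∈ S}`. -/
def dualOf (B : Matrix ι ι ℤ) (S : Set (ι → ℚ)) : AddSubgroup (ι → ℚ) where
  carrier := {x | x ∈ Submodule.span ℚ S ∧ ∀ y ∈ S, isInt (qform B x y)}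
  zero_mem' := ⟨Submodule.zero_mem _, fun y _ => ⟨0, by simp [qform_zero_left]⟩⟩
  add_mem' := by
    intro a b ha hb
    refine ⟨Submodule.add_mem _ ha.1 hb.1, fun y hy => ?_⟩
    obtain ⟨m, hm⟩ := ha.2 y hy
    obtain ⟨m', hm'⟩ := hb.2 y hy
    exact ⟨m + m', by rw [qform_add_left, hm, hm']; push_cast; ring⟩
  neg_mem' := by
    intro a ha
    refine ⟨Submodule.neg_mem _ ha.1, fun y hy => ?_⟩
    obtain ⟨m, hm⟩ := ha.2 y hy
    exact ⟨-m, by rw [qform_neg_left, hm]; push_cast; ring⟩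

/-- Characteristic covectors: `χ ∈ S*` with `⟨χ,y⟩ ≡ ⟨y,y⟩ (mod 2)` for all `y ∈ S`. -/
def CharOf (B : Matrix ι ι ℤ) (S : Set (ι → ℚ)) : Set (ι → ℚ) :=
  {χ | χ ∈ dualOf B S ∧ ∀ y ∈ S, ∃ m : ℤ, qform B χ y - qform B y y = 2 * (m : ℚ)}

/-- Two covectors are in the same class mod `2S`. -/
def SameClass (S : Set (ι → ℚ)) (χ χ' : ι → ℚ) : Prop :=
  ∃ y ∈ S, χ' = χ + (2 : ℚ) • y

/-- Short characteristic covectors: minimal norm in their class mod `2S`. -/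
def ShortOf (B : Matrix ι ι ℤ) (S : Set (ι → ℚ)) : Set (ι → ℚ) :=
  {χ | χ ∈ CharOf B S ∧ ∀ χ' ∈ CharOf B S, SameClass S χ χ' → qform B χ χ ≤ qform B χ' χ'}

/-- Rank of a lattice: dimension of its rational span. -/
noncomputable def rkOf (S : Set (ι → ℚ)) : ℕ := Module.finrank ℚ (Submodule.span ℚ S)

/-- The lattice `S` sitting inside its dual. -/
def latIn (B : Matrix ι ι ℤ) (S : Set (ι → ℚ)) : AddSubgroup (dualOf B S) :=
  AddSubgroup.closure {x | (x : ι → ℚ) ∈ S}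

/-- The discriminant group `S*/S`. -/
def disc (B : Matrix ι ι ℤ) (S : Set (ι → ℚ)) : Type :=
  dualOf B S ⧸ latIn B S

noncomputable instance (B : Matrix ι ι ℤ) (S : Set (ι → ℚ)) : AddCommGroup (disc B S) :=
  inferInstanceAs (AddCommGroup (dualOf B S ⧸ latIn B S))

/-- The class of a dual vector in the discriminant group. -/
def dmk (B : Matrix ι ι ℤ) (S : Set (ι → ℚ)) {x : ι → ℚ} (hx : x ∈ dualOf B S) :
    disc B S := QuotientAddGroup.mk (⟨x, hx⟩ : dualOf B S)

/-- `S` is an additive subgroup (a sublattice, when contained in a lattice). -/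
def IsLat (S : Set (ι → ℚ)) : Prop :=
  (0 : ι → ℚ) ∈ S ∧ ∀ x ∈ S, ∀ y ∈ S, x - y ∈ S

/-- The form is integer valued on `S`. -/
def IntegralOn (B : Matrix ι ι ℤ) (S : Set (ι → ℚ)) : Prop :=
  ∀ x ∈ S, ∀ y ∈ S, isInt (qform B x y)

/-- Unimodularity: the dual lattice equals the lattice. -/
def UnimodularOn (B : Matrix ι ι ℤ) (S : Set (ι → ℚ)) : Prop :=
  ((dualOf B S : AddSubgroup (ι → ℚ)) : Set (ι → ℚ)) = S

/-- Positive definiteness of the form on the span of `S`. -/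
def PosDefOn (B : Matrix ι ι ℤ) (S : Set (ι → ℚ)) : Prop :=
  ∀ x ∈ Submodule.span ℚ S, x ≠ 0 → 0 < qform B x x

/-- Orthogonality of two sublattices. -/
def OrthogonalSets (B : Matrix ι ι ℤ) (S T : Set (ι → ℚ)) : Prop :=
  ∀ x ∈ S, ∀ y ∈ T, qform B x y = 0

/-- `S, T` are complementary sublattices of `L`: orthogonal with ranks summing to `rk L`. -/
noncomputable def ComplementaryIn (B : Matrix ι ι ℤ) (L S T : Set (ι → ℚ)) : Prop :=
  OrthogonalSets B S T ∧ rkOf S + rkOf T = rkOf L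

/-- `S ⊆ L` is a primitive sublattice: the restriction map `L* → S*` surjects. -/
def PrimitiveIn (B : Matrix ι ι ℤ) (L S : Set (ι → ℚ)) : Prop :=
  ∀ x ∈ dualOf B S, ∃ z ∈ dualOf B L, ∀ u ∈ S, qform B z u = qform B x u

/-- `s` is the signature of the form restricted to the span of `S` (Sylvester form). -/
def IsSignatureOf (B : Matrix ι ι ℤ) (S : Set (ι → ℚ)) (s : ℤ) : Prop :=
  ∃ (p q : ℕ) (v : Fin (p + q) → (ι → ℚ)),
    (∀ i, v i ∈ Submodule.span ℚ S) ∧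
    Submodule.span ℚ (Set.range v) = Submodule.span ℚ S ∧
    LinearIndependent ℚ v ∧
    (∀ i j, i ≠ j → qform B (v i) (v j) = 0) ∧
    (∀ i : Fin (p + q),
      if (i : ℕ) < p then 0 < qform B (v i) (v i) else qform B (v i) (v i) < 0) ∧
    s = (p : ℤ) - (q : ℤ)

/-- `S` admits an orthonormal basis of `n` elements, i.e. `S ≅ ℤⁿ`. -/
def HasOrthonormalBasis (B : Matrix ι ι ℤ) (S : Set (ι → ℚ)) (n : ℕ) : Prop :=
  ∃ v : Fin n → (ι → ℚ), (∀ i, v i ∈ S) ∧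
    (∀ i j, qform B (v i) (v j) = if i = j then 1 else 0) ∧
    (∀ x ∈ S, ∃ c : Fin n → ℤ, x = ∑ i, (c i : ℚ) • v i)

/-- Isomorphism of lattices: an additive bijection preserving the forms. -/
def LatIso (B : Matrix ι ι ℤ) (S : Set (ι → ℚ)) (B' : Matrix ι' ι' ℤ) (S' : Set (ι' → ℚ)) :
    Prop :=
  ∃ f : (ι → ℚ) → (ι' → ℚ), Set.BijOn f S S' ∧
    (∀ x ∈ S, ∀ y ∈ S, f (x + y) = f x + f y) ∧
    (∀ x ∈ S, ∀ y ∈ S, qform B' (f x) (f y) = qform B x y)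

/-- An isomorphism of the torsors `C(S₁) → C(S₂)` (given on representatives by `Φ`),
covering the group isomorphism `ψ` of discriminant groups. -/
def TorsorMapIso (B₁ : Matrix ι ι ℤ) (S₁ : Set (ι → ℚ))
    (B₂ : Matrix ι' ι' ℤ) (S₂ : Set (ι' → ℚ))
    (Φ : (ι → ℚ) → (ι' → ℚ)) (ψ : disc B₁ S₁ ≃+ disc B₂ S₂) : Prop :=
  (∀ χ ∈ CharOf B₁ S₁, Φ χ ∈ CharOf B₂ S₂) ∧
  (∀ χ ∈ CharOf B₁ S₁, ∀ χ' ∈ CharOf B₁ S₁,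
    (SameClass S₁ χ χ' ↔ SameClass S₂ (Φ χ) (Φ χ'))) ∧
  (∀ μ ∈ CharOf B₂ S₂, ∃ χ ∈ CharOf B₁ S₁, SameClass S₂ (Φ χ) μ) ∧
  (∀ χ ∈ CharOf B₁ S₁, ∀ χ' ∈ CharOf B₁ S₁,
    ∀ (x : ι → ℚ) (y : ι' → ℚ) (hx : x ∈ dualOf B₁ S₁) (hy : y ∈ dualOf B₂ S₂),
      χ' = χ + (2 : ℚ) • x → Φ χ' = Φ χ + (2 : ℚ) • y →
      ψ (dmk B₁ S₁ hx) = dmk B₂ S₂ hy)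

/-- Compatibility of `Φ` with the `d`-invariants: `d₂([Φ χ]) = ε · d₁([χ])`,
where `d` is the minimum of `(|χ'|² - rk)/4` over the class. -/
noncomputable def DCompat (B₁ : Matrix ι ι ℤ) (S₁ : Set (ι → ℚ))
    (B₂ : Matrix ι' ι' ℤ) (S₂ : Set (ι' → ℚ))
    (ε : ℚ) (Φ : (ι → ℚ) → (ι' → ℚ)) : Prop :=
  ∀ χ ∈ CharOf B₁ S₁, ∀ q : ℚ,
    IsLeast {t | ∃ χ' ∈ CharOf B₁ S₁, SameClass S₁ χ χ' ∧
      t = (qform B₁ χ' χ' - (rkOf S₁ : ℚ)) / 4} q →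
    IsLeast {t | ∃ μ ∈ CharOf B₂ S₂, SameClass S₂ (Φ χ) μ ∧
      t = (qform B₂ μ μ - (rkOf S₂ : ℚ)) / 4} (ε * q)

/-- Compatibility of `Φ` with the `ρ`-invariants: `ρ₂([Φ χ]) ≡ ε · ρ₁([χ]) (mod 2)`. -/
def RhoCompat (B₁ : Matrix ι ι ℤ) (S₁ : Set (ι → ℚ))
    (B₂ : Matrix ι' ι' ℤ) (S₂ : Set (ι' → ℚ))
    (ε : ℚ) (Φ : (ι → ℚ) → (ι' → ℚ)) : Prop :=
  ∀ χ ∈ CharOf B₁ S₁, ∀ s₁ s₂ : ℤ, IsSignatureOf B₁ S₁ s₁ → IsSignatureOf B₂ S₂ s₂ →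
    ∃ m : ℤ, (qform B₂ (Φ χ) (Φ χ) - (s₂ : ℚ)) / 4 - ε * ((qform B₁ χ χ - (s₁ : ℚ)) / 4)
      = 2 * (m : ℚ)

/-- The `d`-invariants `(C(S₁), d₁)` and `(C(S₂), ε·d₂)` are isomorphic. -/
noncomputable def DIso (B₁ : Matrix ι ι ℤ) (S₁ : Set (ι → ℚ))
    (B₂ : Matrix ι' ι' ℤ) (S₂ : Set (ι' → ℚ)) (ε : ℚ) : Prop :=
  ∃ (Φ : (ι → ℚ) → (ι' → ℚ)) (ψ : disc B₁ S₁ ≃+ disc B₂ S₂),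
    TorsorMapIso B₁ S₁ B₂ S₂ Φ ψ ∧ DCompat B₁ S₁ B₂ S₂ ε Φ

end LatticeDefs

/-- An abstract integral lattice, presented by its Gram matrix. -/
structure IntLattice where
  n : ℕ
  B : Matrix (Fin n) (Fin n) ℤ
  symm : B.IsSymm
  nondeg : B.det ≠ 0

/-- The Gram matrix of the orthogonal direct sum `Λ₁ ⊥ Λ₂`. -/
def glueGram (L₁ L₂ : IntLattice) :
    Matrix (Fin L₁.n ⊕ Fin L₂.n) (Fin L₁.n ⊕ Fin L₂.n) ℤ :=
  Matrix.fromBlocks L₁.B 0 0 L₂.B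

/-- The glue lattice `Λ₁ ⊕_ψ Λ₂ = {x + y ∈ Λ₁* ⊕ Λ₂* : ψ(x̄) = ȳ}`. -/
def glueSet (L₁ L₂ : IntLattice)
    (ψ : disc L₁.B (intVecs (Fin L₁.n)) ≃+ disc L₂.B (intVecs (Fin L₂.n))) :
    Set (Fin L₁.n ⊕ Fin L₂.n → ℚ) :=
  {w | ∃ (h₁ : (w ∘ Sum.inl) ∈ dualOf L₁.B (intVecs (Fin L₁.n)))
        (h₂ : (w ∘ Sum.inr) ∈ dualOf L₂.B (intVecs (Fin L₂.n))),
        ψ (dmk _ _ h₁) = dmk _ _ h₂}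

/-- `Λ₁` embedded in the first factor of `Λ₁* ⊕ Λ₂*`. -/
def inlLat (L₁ L₂ : IntLattice) : Set (Fin L₁.n ⊕ Fin L₂.n → ℚ) :=
  {w | (w ∘ Sum.inl) ∈ intVecs (Fin L₁.n) ∧ w ∘ Sum.inr = 0}

/-- `Λ₂` embedded in the second factor of `Λ₁* ⊕ Λ₂*`. -/
def inrLat (L₁ L₂ : IntLattice) : Set (Fin L₁.n ⊕ Fin L₂.n → ℚ) :=
  {w | (w ∘ Sum.inr) ∈ intVecs (Fin L₂.n) ∧ w ∘ Sum.inl = 0}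

/-- Stabilization `S ⊕ ℤᵏ`. -/
def stabSet {ι : Type} [Fintype ι] [DecidableEq ι] (S : Set (ι → ℚ)) (k : ℕ) :
    Set (ι ⊕ Fin k → ℚ) :=
  {w | (w ∘ Sum.inl) ∈ S ∧ ∀ j, isInt (w (Sum.inr j))}

/-- A finite loopless multigraph, with a reference orientation of each edge. -/
structure MultiGraph where
  nV : ℕ
  nE : ℕ
  hd : Fin nE → Fin nV
  tl : Fin nE → Fin nV
  loopless : ∀ e, hd e ≠ tl e

namespace MultiGraph

/-- The boundary map `C₁(G;ℚ) → C₀(G;ℚ)`, `∂ e = head(e) − tail(e)`. -/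
def bndry (G : MultiGraph) (x : Fin G.nE → ℚ) : Fin G.nV → ℚ :=
  fun v => ∑ e, x e * ((if G.hd e = v then 1 else 0) - (if G.tl e = v then 1 else 0))

/-- The flow lattice `ℱ(G) = ker ∂ ∩ C₁(G;ℤ)`. -/
def flowSet (G : MultiGraph) : Set (Fin G.nE → ℚ) :=
  {x | (∀ e, isInt (x e)) ∧ G.bndry x = 0}

/-- The cut lattice `𝒞(G) = im ∂* ∩ C₁(G;ℤ)`. -/
def cutSet (G : MultiGraph) : Set (Fin G.nE → ℚ) :=
  {x | (∀ e, isInt (x e)) ∧ ∃ g : Fin G.nV → ℚ, ∀ e, x e = g (G.hd e) - g (G.tl e)}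

/-- Reachability using only edges from the set `A`. -/
def ReachIn (G : MultiGraph) (A : Set (Fin G.nE)) : Fin G.nV → Fin G.nV → Prop :=
  Relation.ReflTransGen
    (fun u v => ∃ e ∈ A, (G.hd e = u ∧ G.tl e = v) ∨ (G.hd e = v ∧ G.tl e = u))

def Connected (G : MultiGraph) : Prop := ∀ u v, G.ReachIn Set.univ u v

/-- 2-edge-connectedness: connected, and removing any one edge leaves it connected. -/
def TwoEdgeConnected (G : MultiGraph) : Prop :=
  G.Connected ∧ ∀ e : Fin G.nE, ∀ u v, G.ReachIn {e}ᶜ u v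

/-- `C` is the edge set of a cycle of `G`. -/
def IsCycleEdgeSet (G : MultiGraph) (C : Set (Fin G.nE)) : Prop :=
  ∃ k : ℕ, 0 < k ∧ ∃ (e : Fin k → Fin G.nE) (v : Fin k → Fin G.nV),
    Function.Injective e ∧ Function.Injective v ∧ C = Set.range e ∧
    ∀ i, (G.hd (e i) = v (finRotate k i) ∧ G.tl (e i) = v i) ∨
         (G.tl (e i) = v (finRotate k i) ∧ G.hd (e i) = v i)

/-- A maximal spanning forest: acyclic and realizing all of `G`'s reachability. -/
def IsMaxForest (G : MultiGraph) (F : Finset (Fin G.nE)) : Prop :=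
  (∀ C, G.IsCycleEdgeSet C → ¬(C ⊆ (↑F : Set (Fin G.nE)))) ∧
  ∀ u v, G.ReachIn Set.univ u v → G.ReachIn (↑F) u v

open Classical in
/-- The fundamental cut vector of `e ∈ F`:
`+1` on edges leaving the component `K₁` of the tail of `e` in `F − e`,
`−1` on edges entering it, `0` otherwise. -/
noncomputable def cutVec (G : MultiGraph) (F : Finset (Fin G.nE)) (e : Fin G.nE) :
    Fin G.nE → ℚ := fun j =>
  (if G.ReachIn (↑(F.erase e)) (G.tl j) (G.tl e) then 1 else 0)
    - (if G.ReachIn (↑(F.erase e)) (G.hd j) (G.tl e) then 1 else 0)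

/-- `x` is the fundamental cycle vector of `e ∉ F`: the unique flow supported on
`F ∪ {e}` whose coefficient on `e` is `+1`. -/
def IsFundCycleVec (G : MultiGraph) (F : Finset (Fin G.nE)) (e : Fin G.nE)
    (x : Fin G.nE → ℚ) : Prop :=
  G.bndry x = 0 ∧ (∀ j, j ∉ F → j ≠ e → x j = 0) ∧ x e = 1

/-- Reorienting the edges of `G`: `o e = true` keeps the reference direction. -/
def reorient (G : MultiGraph) (o : Fin G.nE → Bool) : MultiGraph :=
  { G with
    hd := fun e => if o e then G.hd e else G.tl e
    tl := fun e => if o e then G.tl e else G.hd e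
    loopless := by
      intro e
      by_cases h : o e = true
      · simpa [h] using G.loopless e
      · simpa [h] using (G.loopless e).symm }

end MultiGraph

/-- A 2-isomorphism: a bijection of edge sets preserving edge sets of cycles. -/
def TwoIsomorphic (G G' : MultiGraph) : Prop :=
  ∃ σ : Fin G.nE ≃ Fin G'.nE, ∀ C, G.IsCycleEdgeSet C ↔ G'.IsCycleEdgeSet (σ '' C)


section AuxProof

variable {ι : Type} [Fintype ι] [DecidableEq ι]

lemma qform_smul_left' (B : Matrix ι ι ℤ) (c : ℚ) (x y : ι → ℚ) :
    qform B (c • x) y = c * qform B x y := smul_dotProduct c x _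

lemma qform_add_right' (B : Matrix ι ι ℤ) (x y y' : ι → ℚ) :
    qform B x (y + y') = qform B x y + qform B x y' := by
  unfold qform; rw [Matrix.mulVec_add, dotProduct_add]

lemma qform_smul_right' (B : Matrix ι ι ℤ) (c : ℚ) (x y : ι → ℚ) :
    qform B x (c • y) = c * qform B x y := by
  unfold qform; rw [Matrix.mulVec_smul, dotProduct_smul, smul_eq_mul]

lemma qform_neg_right' (B : Matrix ι ι ℤ) (x y : ι → ℚ) :
    qform B x (-y) = -qform B x y := by
  unfold qform; rw [Matrix.mulVec_neg, dotProduct_neg]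

lemma qform_sub_right' (B : Matrix ι ι ℤ) (x y y' : ι → ℚ) :
    qform B x (y - y') = qform B x y - qform B x y' := by
  rw [sub_eq_add_neg, qform_add_right', qform_neg_right', sub_eq_add_neg]

lemma qform_sub_left' (B : Matrix ι ι ℤ) (x x' y : ι → ℚ) :
    qform B (x - x') y = qform B x y - qform B x' y := by
  rw [sub_eq_add_neg, qform_add_left, qform_neg_left, sub_eq_add_neg]

lemma qform_comm' {B : Matrix ι ι ℤ} (hB : B.IsSymm) (x y : ι → ℚ) :
    qform B x y = qform B y x := by
  unfold qform
  rw [dotProduct_mulVec, ← Matrix.mulVec_transpose,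
    (hB.map (Int.cast : ℤ → ℚ) : _ᵀ = _), dotProduct_comm]

lemma intVecs_mem_iff {x : ι → ℚ} : x ∈ intVecs ι ↔ ∃ a : ι → ℤ, x = fun i => (a i : ℚ) := by
  constructor
  · intro h
    choose a ha using h
    exact ⟨a, funext ha⟩
  · rintro ⟨a, rfl⟩ i
    exact ⟨a i, rfl⟩

lemma intVecs_zero : (0 : ι → ℚ) ∈ intVecs ι := fun i => ⟨0, by simp⟩

lemma intVecs_add {x y : ι → ℚ} (hx : x ∈ intVecs ι) (hy : y ∈ intVecs ι) :
    x + y ∈ intVecs ι := by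
  intro i
  obtain ⟨a, ha⟩ := hx i; obtain ⟨b, hb⟩ := hy i
  exact ⟨a + b, by simp [ha, hb]⟩

lemma intVecs_neg {x : ι → ℚ} (hx : x ∈ intVecs ι) : -x ∈ intVecs ι := by
  intro i
  obtain ⟨a, ha⟩ := hx i
  exact ⟨-a, by simp [ha]⟩

lemma intVecs_sub {x y : ι → ℚ} (hx : x ∈ intVecs ι) (hy : y ∈ intVecs ι) :
    x - y ∈ intVecs ι := by
  rw [sub_eq_add_neg]; exact intVecs_add hx (intVecs_neg hy)

lemma isInt_qform_int (B : Matrix ι ι ℤ) {x y : ι → ℚ}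
    (hx : x ∈ intVecs ι) (hy : y ∈ intVecs ι) : isInt (qform B x y) := by
  obtain ⟨a, rfl⟩ := intVecs_mem_iff.mp hx
  obtain ⟨b, rfl⟩ := intVecs_mem_iff.mp hy
  refine ⟨∑ i, ∑ j, a i * B i j * b j, ?_⟩
  unfold qform dotProduct Matrix.mulVec
  simp only [Matrix.map_apply]
  push_cast
  simp [Finset.mul_sum, mul_assoc, dotProduct]

lemma single_mem_intVecs (i : ι) : (fun j => if i = j then (1:ℚ) else 0) ∈ intVecs ι := by
  intro j
  by_cases h : i = j
  · simp only [h, if_pos rfl]; exact ⟨1, by simp⟩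
  · simp only [if_neg h]; exact ⟨0, by simp⟩

lemma mem_span_intVecs (x : ι → ℚ) : x ∈ Submodule.span ℚ (intVecs ι) := by
  rw [pi_eq_sum_univ x]
  exact Submodule.sum_mem _ fun i _ =>
    Submodule.smul_mem _ _ (Submodule.subset_span (single_mem_intVecs i))

lemma span_intVecs_eq_top : Submodule.span ℚ (intVecs ι) = ⊤ :=
  eq_top_iff.mpr fun x _ => mem_span_intVecs x

lemma int_mem_dual (B : Matrix ι ι ℤ) {x : ι → ℚ} (hx : x ∈ intVecs ι) :
    x ∈ dualOf B (intVecs ι) :=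
  ⟨mem_span_intVecs x, fun y hy => isInt_qform_int B hx hy⟩


lemma qform_zero_right' (B : Matrix ι ι ℤ) (x : ι → ℚ) : qform B x 0 = 0 := by
  unfold qform; rw [Matrix.mulVec_zero, dotProduct_zero]

lemma latIn_isInt (B : Matrix ι ι ℤ) {a : dualOf B (intVecs ι)}
    (ha : a ∈ latIn B (intVecs ι)) : ((a : ι → ℚ)) ∈ intVecs ι := by
  refine AddSubgroup.closure_induction (fun x hx => hx) intVecs_zero
    (fun x y _ _ px py => intVecs_add px py) (fun x _ px => intVecs_neg px) ha

lemma dmk_eq_imp (B : Matrix ι ι ℤ) {x y : ι → ℚ} (hx : x ∈ dualOf B (intVecs ι))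
    (hy : y ∈ dualOf B (intVecs ι)) (h : dmk B (intVecs ι) hx = dmk B (intVecs ι) hy) :
    y - x ∈ intVecs ι := by
  have h2 := latIn_isInt B (QuotientAddGroup.eq.mp h)
  simpa [neg_add_eq_sub] using h2

lemma dmk_add (B : Matrix ι ι ℤ) {x y : ι → ℚ} (hx : x ∈ dualOf B (intVecs ι))
    (hy : y ∈ dualOf B (intVecs ι)) :
    dmk B (intVecs ι) (add_mem hx hy) = dmk B (intVecs ι) hx + dmk B (intVecs ι) hy := rfl

lemma qform_single' (B : Matrix ι ι ℤ) (i j : ι) :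
    qform B (fun k => if i = k then (1:ℚ) else 0) (fun k => if j = k then 1 else 0)
      = (B i j : ℚ) := by
  unfold qform Matrix.mulVec
  simp [dotProduct, Matrix.map_apply, ite_mul, mul_ite, Finset.sum_ite_eq]

lemma exists_char (B : Matrix ι ι ℤ) (hB : B.IsSymm) (hd : B.det ≠ 0) :
    ∃ χ, χ ∈ CharOf B (intVecs ι) := by
  classical
  set M : Matrix ι ι ℚ := B.map (Int.cast : ℤ → ℚ) with hM
  have hdetM : M.det ≠ 0 := by
    have : M.det = ((B.det : ℤ) : ℚ) := ((RingHom.map_det (Int.castRingHom ℚ) B)).symm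
    rw [this]
    exact_mod_cast hd
  set d : ι → ℚ := fun i => (B i i : ℚ) with hdd
  set χ : ι → ℚ := M⁻¹ *ᵥ d with hχ
  have hMχ : M *ᵥ χ = d := by
    rw [hχ, Matrix.mulVec_mulVec, Matrix.mul_nonsing_inv _ (isUnit_iff_ne_zero.mpr hdetM),
      Matrix.one_mulVec]
  have key : ∀ y : ι → ℚ, qform B χ y = d ⬝ᵥ y := by
    intro y
    have h1 : qform B χ y = (χ ᵥ* M) ⬝ᵥ y := dotProduct_mulVec χ M y
    rw [h1, ← Matrix.mulVec_transpose, (hB.map (Int.cast : ℤ → ℚ) : Mᵀ = M), hMχ]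
  have hχdual : χ ∈ dualOf B (intVecs ι) := by
    refine ⟨mem_span_intVecs χ, fun y hy => ?_⟩
    obtain ⟨a, rfl⟩ := intVecs_mem_iff.mp hy
    refine ⟨∑ i, B i i * a i, ?_⟩
    rw [key]
    push_cast
    simp [dotProduct, hdd]
  -- the characteristic condition, by induction on integer vectors
  set e : ι → ι → ℚ := fun i k => if i = k then 1 else 0 with he
  set P : (ι → ℚ) → Prop :=
    fun y => y ∈ intVecs ι ∧ ∃ m : ℤ, qform B χ y - qform B y y = 2 * (m : ℚ) with hP
  have Padd : ∀ u v, P u → P v → P (u + v) := by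
    rintro u v ⟨hu, mu, hmu⟩ ⟨hv, mv, hmv⟩
    obtain ⟨k, hk⟩ := isInt_qform_int B hu hv
    refine ⟨intVecs_add hu hv, mu + mv - k, ?_⟩
    have hcomm : qform B v u = qform B u v := qform_comm' hB v u
    rw [qform_add_right', qform_add_left, qform_add_right', qform_add_right', hcomm]
    push_cast
    linarith [hmu, hmv, hk]
  have Psingle : ∀ (c : ℤ) (i : ι), P ((c : ℚ) • e i) := by
    intro c i
    have hmem : ((c : ℚ) • e i) ∈ intVecs ι := by
      intro k
      by_cases h : i = k
      · exact ⟨c, by simp [he, h]⟩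
      · exact ⟨0, by simp [he, h]⟩
    obtain ⟨t, ht⟩ := Int.even_mul_succ_self (c - 1)
    have hzz : (c : ℤ) * B i i - c ^ 2 * B i i = 2 * (-t * B i i) := by
      linear_combination (-(B i i)) * ht
    refine ⟨hmem, -t * B i i, ?_⟩
    have h1 : qform B χ (e i) = (B i i : ℚ) := by
      rw [key]
      simp [hdd, he, dotProduct, mul_ite, Finset.sum_ite_eq]
    have h2 : qform B (e i) (e i) = (B i i : ℚ) := qform_single' B i i
    rw [qform_smul_right', qform_smul_left', qform_smul_right', h1, h2]
    have htq : ((c : ℚ) - 1) * ((c : ℚ) - 1 + 1) = (t : ℚ) + (t : ℚ) := by exact_mod_cast ht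
    push_cast
    linear_combination (-((B i i : ℚ))) * htq
  have Pzero : P 0 := ⟨intVecs_zero, 0, by rw [qform_zero_right', qform_zero_left]; simp⟩
  refine ⟨χ, hχdual, fun y hy => ?_⟩
  obtain ⟨a, rfl⟩ := intVecs_mem_iff.mp hy
  have main : ∀ s : Finset ι, P (∑ i ∈ s, ((a i : ℚ)) • e i) := by
    intro s
    induction s using Finset.induction with
    | empty => simpa using Pzero
    | insert _ _ hnot ih =>
        rw [Finset.sum_insert hnot]
        exact Padd _ _ (Psingle _ _) ih
  have := (main Finset.univ).2
  rwa [← pi_eq_sum_univ (fun i => (a i : ℚ))] at this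



lemma qform_sum_right' {κ : Type*} (B : Matrix ι ι ℤ) (x : ι → ℚ) (s : Finset κ)
    (g : κ → (ι → ℚ)) : qform B x (∑ j ∈ s, g j) = ∑ j ∈ s, qform B x (g j) := by
  classical
  induction s using Finset.induction with
  | empty => simp [qform_zero_right']
  | insert _ _ hnot ih => rw [Finset.sum_insert hnot, Finset.sum_insert hnot, qform_add_right', ih]

set_option maxHeartbeats 2000000 in
lemma exists_signature (B : Matrix ι ι ℤ) (hB : B.IsSymm) (hd : B.det ≠ 0) :
    ∃ s : ℤ, IsSignatureOf B (intVecs ι) s := by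
  classical
  haveI : Invertible (2 : ℚ) := invertibleOfNonzero (by norm_num)
  have hdetM : (B.map (Int.cast : ℤ → ℚ)).det ≠ 0 := by
    have h : (B.map (Int.cast : ℤ → ℚ)).det = ((B.det : ℤ) : ℚ) :=
      (RingHom.map_det (Int.castRingHom ℚ) B).symm
    rw [h]; exact_mod_cast hd
  obtain ⟨v, hv⟩ : ∃ v : Module.Basis (Fin (Module.finrank ℚ (ι → ℚ))) ℚ (ι → ℚ),
      ∀ i j, i ≠ j → qform B (v i) (v j) = 0 := by
    have hqf : ∀ x y, qform B x y = Matrix.toBilin' (B.map (Int.cast : ℤ → ℚ)) x y :=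
      fun x y => (Matrix.toBilin'_apply' _ x y).symm
    have hsym : LinearMap.IsSymm (Matrix.toBilin' (B.map (Int.cast : ℤ → ℚ))) := by
      rw [LinearMap.isSymm_def]
      intro x y
      simp only [RingHom.id_apply]
      rw [← hqf, ← hqf]
      exact qform_comm' hB x y
    obtain ⟨v, hv⟩ := LinearMap.BilinForm.exists_orthogonal_basis hsym
    exact ⟨v, fun i j hij => by rw [hqf]; exact hv hij⟩
  have hnd : ∀ i, qform B (v i) (v i) ≠ 0 := by
    intro i h0
    have hall : ∀ w, qform B (v i) w = 0 := by
      intro w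
      rw [← Module.Basis.sum_repr v w, qform_sum_right']
      refine Finset.sum_eq_zero fun j _ => ?_
      rw [qform_smul_right']
      rcases eq_or_ne i j with h | h
      · rw [← h, h0, mul_zero]
      · rw [hv i j h, mul_zero]
    have hM0 : v i = 0 := (Matrix.nondegenerate_of_det_ne_zero hdetM).eq_zero_of_ortho (fun w => hall w)
    exact Module.Basis.ne_zero v i hM0
  set P : Finset (Fin (Module.finrank ℚ (ι → ℚ))) :=
    Finset.univ.filter (fun i => 0 < qform B (v i) (v i)) with hPdef
  set p := P.card with hpdef
  set q := Pᶜ.card with hqdef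
  have hp : P.card = p := rfl
  have hq : Pᶜ.card = q := rfl
  set f : Fin (p + q) → Fin (Module.finrank ℚ (ι → ℚ)) := fun i =>
    if h : (i : ℕ) < p then ((P.orderIsoOfFin hp ⟨(i : ℕ), h⟩ : {x // x ∈ P}) :
      Fin (Module.finrank ℚ (ι → ℚ)))
    else ((Pᶜ.orderIsoOfFin hq ⟨(i : ℕ) - p, by have := i.2; omega⟩ : {x // x ∈ Pᶜ}) :
      Fin (Module.finrank ℚ (ι → ℚ)))
    with hf
  have hfP : ∀ (i : Fin (p + q)) (h : (i : ℕ) < p), f i ∈ P := by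
    intro i h
    simp only [hf, dif_pos h]
    exact (P.orderIsoOfFin hp ⟨(i : ℕ), h⟩).2
  have hfPc : ∀ (i : Fin (p + q)) (h : ¬ (i : ℕ) < p), f i ∈ Pᶜ := by
    intro i h
    simp only [hf, dif_neg h]
    exact (Pᶜ.orderIsoOfFin hq ⟨(i : ℕ) - p, by have := i.2; omega⟩).2
  have hfinj : Function.Injective f := by
    intro i j hij
    by_cases hi : (i : ℕ) < p <;> by_cases hj : (j : ℕ) < p
    · simp only [hf, dif_pos hi, dif_pos hj] at hij
      have h2 := (P.orderIsoOfFin hp).injective (Subtype.coe_injective hij)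
      have h3 := congrArg Fin.val h2
      exact Fin.ext h3
    · exact absurd (hfP i hi) (by rw [hij]; exact fun hh => (Finset.mem_compl.mp (hfPc j hj)) hh)
    · exact absurd (hfP j hj) (by rw [← hij]; exact fun hh => (Finset.mem_compl.mp (hfPc i hi)) hh)
    · simp only [hf, dif_neg hi, dif_neg hj] at hij
      have h2 := (Pᶜ.orderIsoOfFin hq).injective (Subtype.coe_injective hij)
      have h3 := congrArg Fin.val h2
      have hi2 := i.2; have hj2 := j.2
      exact Fin.ext (by simp only [] at h3; omega)
  have hfsurj : Function.Surjective f := by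
    have hcard : Fintype.card (Fin (p + q)) = Fintype.card (Fin (Module.finrank ℚ (ι → ℚ))) := by
      rw [Fintype.card_fin, Fintype.card_fin, hpdef, hqdef, Finset.card_add_card_compl,
        Fintype.card_fin]
    exact ((Fintype.bijective_iff_injective_and_card f).mpr ⟨hfinj, hcard⟩).2
  refine ⟨(p : ℤ) - (q : ℤ), p, q, fun i => v (f i), ?_, ?_, ?_, ?_, ?_, rfl⟩
  · intro i; rw [span_intVecs_eq_top]; trivial
  · have hrange : Set.range (fun i => v (f i)) = Set.range v := by
      rw [show (fun i => v (f i)) = v ∘ f from rfl, Set.range_comp, hfsurj.range_eq,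
        Set.image_univ]
    rw [hrange, Module.Basis.span_eq, span_intVecs_eq_top]
  · exact v.linearIndependent.comp f hfinj
  · intro i j hij
    exact hv (f i) (f j) (fun h => hij (hfinj h))
  · intro i
    by_cases h : (i : ℕ) < p
    · rw [if_pos h]
      exact (Finset.mem_filter.mp (hfP i h)).2
    · rw [if_neg h]
      have h1 := Finset.mem_compl.mp (hfPc i h)
      have h2 : ¬ 0 < qform B (v (f i)) (v (f i)) := fun hlt =>
        h1 (Finset.mem_filter.mpr ⟨Finset.mem_univ _, hlt⟩)
      exact lt_of_le_of_ne (le_of_not_gt h2) (hnd (f i))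


lemma char_add_two_dual (B : Matrix ι ι ℤ) {χ x : ι → ℚ}
    (hχ : χ ∈ CharOf B (intVecs ι)) (hx : x ∈ dualOf B (intVecs ι)) :
    χ + (2:ℚ) • x ∈ CharOf B (intVecs ι) := by
  obtain ⟨hχd, hχc⟩ := hχ
  have h2x : (2:ℚ) • x ∈ dualOf B (intVecs ι) := by
    rw [two_smul ℚ x]; exact add_mem hx hx
  refine ⟨add_mem hχd h2x, fun y hy => ?_⟩
  obtain ⟨m, hm⟩ := hχc y hy
  obtain ⟨k, hk⟩ := hx.2 y hy
  refine ⟨m + k, ?_⟩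
  rw [qform_add_left, qform_smul_left']
  push_cast
  linarith [hm, hk]

end AuxProof

/-- An isomorphism of ρ-invariants induces an isomorphism of
discriminant forms: `b₂(ψ x̄, ψ ȳ) = b₁(x̄, ȳ)` in `ℚ/ℤ`. -/
theorem stmt_3 (L₁ L₂ : IntLattice)
    (Φ : (Fin L₁.n → ℚ) → (Fin L₂.n → ℚ))
    (ψ : disc L₁.B (intVecs (Fin L₁.n)) ≃+ disc L₂.B (intVecs (Fin L₂.n)))
    (hiso : TorsorMapIso L₁.B (intVecs (Fin L₁.n)) L₂.B (intVecs (Fin L₂.n)) Φ ψ)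
    (hrho : RhoCompat L₁.B (intVecs (Fin L₁.n)) L₂.B (intVecs (Fin L₂.n)) 1 Φ) :
    ∀ (x x' : Fin L₁.n → ℚ) (y y' : Fin L₂.n → ℚ)
      (hx : x ∈ dualOf L₁.B (intVecs (Fin L₁.n)))
      (hx' : x' ∈ dualOf L₁.B (intVecs (Fin L₁.n)))
      (hy : y ∈ dualOf L₂.B (intVecs (Fin L₂.n)))
      (hy' : y' ∈ dualOf L₂.B (intVecs (Fin L₂.n))),
      ψ (dmk _ _ hx) = dmk _ _ hy → ψ (dmk _ _ hx') = dmk _ _ hy' →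
      ∃ m : ℤ, qform L₂.B y y' - qform L₁.B x x' = (m : ℚ) := by
  intro x x' y y' hx hx' hy hy' hψx hψx'
  obtain ⟨χ, hχ⟩ := exists_char L₁.B L₁.symm L₁.nondeg
  obtain ⟨s₁, hs₁⟩ := exists_signature L₁.B L₁.symm L₁.nondeg
  obtain ⟨s₂, hs₂⟩ := exists_signature L₂.B L₂.symm L₂.nondeg
  obtain ⟨hΦchar, hclass, hΦsurj, hglue⟩ := hiso
  -- key: for each dual pair (a, b) with ψ[a] = [b], the image of χ + 2a is χ's image
  -- shifted by 2(b + w) with w integral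
  have key : ∀ (a : Fin L₁.n → ℚ) (ha : a ∈ dualOf L₁.B (intVecs (Fin L₁.n)))
      (b : Fin L₂.n → ℚ) (hb : b ∈ dualOf L₂.B (intVecs (Fin L₂.n))),
      ψ (dmk L₁.B (intVecs (Fin L₁.n)) ha) = dmk L₂.B (intVecs (Fin L₂.n)) hb →
      ∃ w ∈ intVecs (Fin L₂.n), Φ (χ + (2:ℚ) • a) = Φ χ + (2:ℚ) • (b + w) := by
    intro a ha b hb hab
    have hχa : χ + (2:ℚ) • a ∈ CharOf L₁.B (intVecs (Fin L₁.n)) :=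
      char_add_two_dual L₁.B hχ ha
    set Y : Fin L₂.n → ℚ := (2⁻¹ : ℚ) • (Φ (χ + (2:ℚ) • a) - Φ χ) with hYdef
    have hYd : Y ∈ dualOf L₂.B (intVecs (Fin L₂.n)) := by
      refine ⟨mem_span_intVecs Y, fun u hu => ?_⟩
      obtain ⟨m1, hm1⟩ := (hΦchar _ hχa).2 u hu
      obtain ⟨m2, hm2⟩ := (hΦchar _ hχ).2 u hu
      refine ⟨m1 - m2, ?_⟩
      rw [hYdef, qform_smul_left', qform_sub_left']
      push_cast
      linarith [hm1, hm2]
    have hEq : Φ (χ + (2:ℚ) • a) = Φ χ + (2:ℚ) • Y := by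
      rw [hYdef, smul_smul]
      norm_num
    have hψY := hglue χ hχ (χ + (2:ℚ) • a) hχa a Y ha hYd rfl hEq
    rw [hab] at hψY
    have hwI : Y - b ∈ intVecs (Fin L₂.n) := dmk_eq_imp L₂.B hb hYd hψY
    refine ⟨Y - b, hwI, ?_⟩
    rw [show b + (Y - b) = Y from by abel, hEq]
  obtain ⟨v, hvI, hv⟩ := key x hx y hy hψx
  obtain ⟨v', hv'I, hv'⟩ := key x' hx' y' hy' hψx'
  have hψsum : ψ (dmk L₁.B (intVecs (Fin L₁.n)) (add_mem hx hx'))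
      = dmk L₂.B (intVecs (Fin L₂.n)) (add_mem hy hy') := by
    rw [dmk_add L₁.B hx hx', map_add, hψx, hψx', ← dmk_add L₂.B hy hy']
  obtain ⟨w, hwI, hw⟩ := key (x + x') (add_mem hx hx') (y + y') (add_mem hy hy') hψsum
  set u : Fin L₂.n → ℚ := w - v - v' with hudef
  have huI : u ∈ intVecs (Fin L₂.n) := intVecs_sub (intVecs_sub hwI hvI) hv'I
  have hsum : y + y' + w = y + v + (y' + v') + u := by rw [hudef]; abel
  have hw2 : Φ (χ + (2:ℚ) • (x + x')) = Φ χ + (2:ℚ) • (y + v + (y' + v') + u) := by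
    rw [hw, hsum]
  -- rho-compatibility at the four characteristic vectors
  obtain ⟨a₀, hA0⟩ := hrho χ hχ s₁ s₂ hs₁ hs₂
  obtain ⟨a₁, hA1⟩ := hrho (χ + (2:ℚ) • x) (char_add_two_dual L₁.B hχ hx) s₁ s₂ hs₁ hs₂
  obtain ⟨a₂, hA2⟩ := hrho (χ + (2:ℚ) • x') (char_add_two_dual L₁.B hχ hx') s₁ s₂ hs₁ hs₂
  obtain ⟨a₃, hA3⟩ := hrho (χ + (2:ℚ) • (x + x'))
    (char_add_two_dual L₁.B hχ (add_mem hx hx')) s₁ s₂ hs₁ hs₂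
  rw [hv] at hA1
  rw [hv'] at hA2
  rw [hw2] at hA3
  -- integrality facts
  obtain ⟨dI, hdI⟩ := (hΦchar χ hχ).2 u huI
  obtain ⟨eI, heI⟩ := isInt_qform_int L₂.B huI huI
  obtain ⟨p1, hp1⟩ := hy.2 u huI
  obtain ⟨p2, hp2⟩ := isInt_qform_int L₂.B hvI huI
  obtain ⟨q1, hq1⟩ := hy'.2 u huI
  obtain ⟨q2, hq2⟩ := isInt_qform_int L₂.B hv'I huI
  obtain ⟨r1, hr1⟩ := hy.2 v' hv'I
  obtain ⟨r2, hr2⟩ := hy'.2 v hvI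
  obtain ⟨r3, hr3⟩ := isInt_qform_int L₂.B hvI hv'I
  have c₂ := fun a b => qform_comm' (B := L₂.B) L₂.symm a b
  have c₁ := fun a b => qform_comm' (B := L₁.B) L₁.symm a b
  refine ⟨a₃ - a₁ - a₂ + a₀ - dI - eI - p1 - p2 - q1 - q2 - r1 - r2 - r3, ?_⟩
  simp only [qform_add_left, qform_add_right', qform_smul_left', qform_smul_right']
    at hA0 hA1 hA2 hA3 hdI heI hp1 hp2 hq1 hq2 hr1 hr2 hr3
  push_cast
  linarith [hA0, hA1, hA2, hA3, hdI, heI, hp1, hp2, hq1, hq2, hr1, hr2, hr3,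
    c₂ y (Φ χ), c₂ v (Φ χ), c₂ y' (Φ χ), c₂ v' (Φ χ), c₂ u (Φ χ),
    c₂ v y, c₂ y' y, c₂ v' y, c₂ u y, c₂ y' v, c₂ v' v, c₂ u v,
    c₂ v' y', c₂ u y', c₂ u v',
    c₁ x χ, c₁ x' χ, c₁ x' x]

end Greene
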